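/- G satisfies the loop law if and only if for every real z > 0 and every natural number r ≥ 0, the traces agree: tr(A(z)^r) = tr(A(1)^r). -/

import Mathlib

open Matrix BigOperators

variable {V : Type*} [Fintype V] [DecidableEq V]

/-- The signed weight `w*`: `w*(u,v) = w(u,v)` if `(u,v)` is an arc, and
`w*(u,v) = -w(v,u)` if `(v,u)` is an arc. -/
def wstar (E : V → V → Prop) [DecidableRel E] (w : V → V → ℝ) (u v : V) : ℝ :=
  if E u v then w u v else -(w v u)

/-- The polynomial matrix `A(z)`, with `(A(z))_{uv} = z ^ w*(u,v)` (real power)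
whenever `(u,v)` or `(v,u)` is an arc, and `0` otherwise. -/
noncomputable def polyMat (E : V → V → Prop) [DecidableRel E]
    (w : V → V → ℝ) (z : ℝ) : Matrix V V ℝ :=
  fun u v => if E u v ∨ E v u then z ^ (wstar E w u v) else 0

/-- Walks of length `r` from `u` to `v` in the underlying graph `UG`. -/
def walks (E : V → V → Prop) [DecidableRel E] (r : ℕ) (u v : V) :
    Finset (Fin (r + 1) → V) :=
  Finset.univ.filter fun p =>
    p 0 = u ∧ p (Fin.last r) = v ∧
      ∀ i : Fin r, E (p i.castSucc) (p i.succ) ∨ E (p i.succ) (p i.castSucc)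

/-- The weight `w*(p)` of a walk `p` of length `r`. -/
def walkWeight (E : V → V → Prop) [DecidableRel E] (w : V → V → ℝ) {r : ℕ}
    (p : Fin (r + 1) → V) : ℝ :=
  ∑ i : Fin r, wstar E w (p i.castSucc) (p i.succ)

/-- The loop law: every closed walk in the underlying graph has weight `0`. -/
def LoopLaw (E : V → V → Prop) [DecidableRel E] (w : V → V → ℝ) : Prop :=
  ∀ (r : ℕ) (p : Fin (r + 1) → V),
    (∀ i : Fin r, E (p i.castSucc) (p i.succ) ∨ E (p i.succ) (p i.castSucc)) →
    p 0 = p (Fin.last r) → walkWeight E w p = 0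

/-! ### Auxiliary lemmas -/

def snocEquivFun (r : ℕ) : ((Fin (r + 1) → V) × V) ≃ (Fin (r + 2) → V) where
  toFun qx := Fin.snoc qx.1 qx.2
  invFun p := (Fin.init p, p (Fin.last _))
  left_inv := by rintro ⟨q, x⟩; simp
  right_inv := by intro p; simp

@[simp] lemma snocEquivFun_apply (r : ℕ) (q : Fin (r + 1) → V) (x : V) :
    snocEquivFun r (q, x) = Fin.snoc q x := rfl

/-- Entries of matrix powers as sums over tuples. -/
lemma matPow_apply (A : Matrix V V ℝ) : ∀ (r : ℕ) (u v : V),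
    (A ^ r) u v = ∑ p : Fin (r + 1) → V,
      if p 0 = u ∧ p (Fin.last r) = v then
        ∏ i : Fin r, A (p i.castSucc) (p i.succ) else 0 := by
  intro r
  induction r with
  | zero =>
    intro u v
    have hsum : (∑ p : Fin (0 + 1) → V,
        if p 0 = u ∧ p (Fin.last 0) = v then
          ∏ i : Fin 0, A (p i.castSucc) (p i.succ) else 0)
        = ∑ y : V, if y = u ∧ y = v then (1 : ℝ) else 0 := by
      refine Fintype.sum_equiv (Equiv.funUnique (Fin 1) V) _ _ fun p => ?_
      simp [Equiv.funUnique, Fin.last]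
    rw [pow_zero, hsum]
    rcases eq_or_ne u v with rfl | h
    · simp [Matrix.one_apply]
    · rw [Matrix.one_apply_ne h, Finset.sum_eq_zero]
      intro y _
      have : ¬ (y = u ∧ y = v) := fun hh => h (hh.1.symm.trans hh.2)
      simp [this]
  | succ r ih =>
    intro u v
    set P : (Fin (r + 1) → V) → ℝ :=
      fun q => ∏ i : Fin r, A (q i.castSucc) (q i.succ) with hP
    have LHS : (A ^ (r + 1)) u v
        = ∑ q : Fin (r + 1) → V,
            if q 0 = u then P q * A (q (Fin.last r)) v else 0 := by
      rw [pow_succ, Matrix.mul_apply]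
      simp only [ih]
      simp only [Finset.sum_mul]
      rw [Finset.sum_comm]
      refine Finset.sum_congr rfl fun q _ => ?_
      rw [Finset.sum_eq_single (q (Fin.last r))]
      · by_cases h : q 0 = u <;> simp [h, hP]
      · intro x _ hx
        have : ¬ (q 0 = u ∧ q (Fin.last r) = x) := fun hh => hx hh.2.symm
        simp [this]
      · simp
    rw [LHS]
    refine Eq.trans ?_ (Fintype.sum_equiv (snocEquivFun r)
      (fun qx : (Fin (r + 1) → V) × V =>
        if qx.1 0 = u ∧ qx.2 = v then P qx.1 * A (qx.1 (Fin.last r)) qx.2 else 0)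
      _ ?_)
    · rw [Fintype.sum_prod_type]
      refine Finset.sum_congr rfl fun q _ => ?_
      rw [Finset.sum_eq_single v]
      · simp
      · intro x _ hx
        have : ¬ (q 0 = u ∧ x = v) := fun hh => hx hh.2
        simp [this]
      · simp
    · rintro ⟨q, x⟩
      simp only [snocEquivFun_apply]
      have h0 : (Fin.snoc q x : Fin (r + 2) → V) 0 = q 0 := by
        rw [show (0 : Fin (r + 2)) = Fin.castSucc 0 from Fin.castSucc_zero.symm,
          Fin.snoc_castSucc]
      have hlast : (Fin.snoc q x : Fin (r + 2) → V) (Fin.last (r + 1)) = x :=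
        Fin.snoc_last _ _
      have hprod : (∏ i : Fin (r + 1),
          A ((Fin.snoc q x : Fin (r + 2) → V) i.castSucc)
            ((Fin.snoc q x : Fin (r + 2) → V) i.succ))
          = P q * A (q (Fin.last r)) x := by
        rw [Fin.prod_univ_castSucc]
        congr 1
        · refine Finset.prod_congr rfl fun i _ => ?_
          rw [Fin.succ_castSucc, Fin.snoc_castSucc, Fin.snoc_castSucc]
        · rw [Fin.succ_last, Fin.snoc_castSucc, Fin.snoc_last]
      simp only [hprod, h0, hlast]

/-- If `∑ i in s, z ^ c i` is constantly `s.card` on `(0, ∞)`, all exponents vanish. -/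
lemma exponents_eq_zero {ι : Type*} (s : Finset ι) (c : ι → ℝ)
    (h : ∀ z : ℝ, 0 < z → ∑ i ∈ s, z ^ (c i) = (s.card : ℝ)) :
    ∀ i ∈ s, c i = 0 := by
  have hd1 : ∀ z : ℝ, 0 < z → ∑ i ∈ s, c i * z ^ (c i - 1) = 0 := by
    intro z hz
    have hf : HasDerivAt (fun z : ℝ => ∑ i ∈ s, z ^ (c i))
        (∑ i ∈ s, c i * z ^ (c i - 1)) z :=
      HasDerivAt.fun_sum fun i _ => Real.hasDerivAt_rpow_const (Or.inl hz.ne')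
    have hev : (fun z : ℝ => ∑ i ∈ s, z ^ (c i)) =ᶠ[nhds z]
        fun _ => (s.card : ℝ) :=
      Filter.eventuallyEq_of_mem (isOpen_Ioi.mem_nhds hz) fun y hy => h y hy
    have hc : HasDerivAt (fun z : ℝ => ∑ i ∈ s, z ^ (c i)) 0 z :=
      (hasDerivAt_const z ((s.card : ℝ))).congr_of_eventuallyEq hev
    exact hf.unique hc
  have hd2 : ∀ z : ℝ, 0 < z → ∑ i ∈ s, c i * ((c i - 1) * z ^ (c i - 1 - 1)) = 0 := by
    intro z hz
    have hf : HasDerivAt (fun z : ℝ => ∑ i ∈ s, c i * z ^ (c i - 1))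
        (∑ i ∈ s, c i * ((c i - 1) * z ^ (c i - 1 - 1))) z :=
      HasDerivAt.fun_sum fun i _ =>
        (Real.hasDerivAt_rpow_const (Or.inl hz.ne')).const_mul (c i)
    have hev : (fun z : ℝ => ∑ i ∈ s, c i * z ^ (c i - 1)) =ᶠ[nhds z]
        fun _ => (0 : ℝ) :=
      Filter.eventuallyEq_of_mem (isOpen_Ioi.mem_nhds hz) fun y hy => hd1 y hy
    have hc : HasDerivAt (fun z : ℝ => ∑ i ∈ s, c i * z ^ (c i - 1)) 0 z :=
      (hasDerivAt_const z (0 : ℝ)).congr_of_eventuallyEq hev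
    exact hf.unique hc
  have h1 : ∑ i ∈ s, c i = 0 := by
    have := hd1 1 one_pos
    simpa using this
  have h2 : ∑ i ∈ s, c i * (c i - 1) = 0 := by
    have := hd2 1 one_pos
    simpa using this
  have hsq : ∑ i ∈ s, (c i) ^ 2 = 0 := by
    have : ∑ i ∈ s, (c i) ^ 2 = ∑ i ∈ s, (c i * (c i - 1) + c i) :=
      Finset.sum_congr rfl fun i _ => by ring
    rw [this, Finset.sum_add_distrib, h1, h2, add_zero]
  intro i hi
  have := (Finset.sum_eq_zero_iff_of_nonneg (fun j _ => sq_nonneg (c j))).1 hsq i hi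
  exact pow_eq_zero_iff two_ne_zero |>.mp this

/-- The product of matrix entries along a walk, evaluated. -/
lemma prod_polyMat_entries (E : V → V → Prop) [DecidableRel E] (w : V → V → ℝ)
    {z : ℝ} (hz : 0 < z) {r : ℕ} (p : Fin (r + 1) → V) :
    (∏ i : Fin r, polyMat E w z (p i.castSucc) (p i.succ)) =
      if (∀ i : Fin r, E (p i.castSucc) (p i.succ) ∨ E (p i.succ) (p i.castSucc))
      then z ^ walkWeight E w p else 0 := by
  by_cases h : ∀ i : Fin r, E (p i.castSucc) (p i.succ) ∨ E (p i.succ) (p i.castSucc)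
  · rw [if_pos h, walkWeight, Real.rpow_sum_of_pos hz]
    refine Finset.prod_congr rfl fun i _ => ?_
    simp [polyMat, h i]
  · obtain ⟨i, hi⟩ := not_forall.mp h
    rw [if_neg h]
    exact Finset.prod_eq_zero (Finset.mem_univ i) (by simp [polyMat, hi])

/-- The closed walks of length `r`. -/
def closedWalks (E : V → V → Prop) [DecidableRel E] (r : ℕ) :
    Finset (Fin (r + 1) → V) :=
  Finset.univ.filter fun p =>
    (∀ i : Fin r, E (p i.castSucc) (p i.succ) ∨ E (p i.succ) (p i.castSucc)) ∧
      p 0 = p (Fin.last r)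

/-- The trace formula: the trace of `A(z)^r` is the sum over closed walks of `z^{w*(p)}`. -/
lemma trace_polyMat_pow (E : V → V → Prop) [DecidableRel E] (w : V → V → ℝ)
    {z : ℝ} (hz : 0 < z) (r : ℕ) :
    Matrix.trace (polyMat E w z ^ r) =
      ∑ p ∈ closedWalks E r, z ^ walkWeight E w p := by
  have h1 : Matrix.trace (polyMat E w z ^ r)
      = ∑ u : V, ∑ p : Fin (r + 1) → V,
          if p 0 = u ∧ p (Fin.last r) = u then
            ∏ i : Fin r, polyMat E w z (p i.castSucc) (p i.succ) else 0 := by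
    rw [Matrix.trace]
    exact Finset.sum_congr rfl fun u _ => matPow_apply _ r u u
  rw [h1, Finset.sum_comm, closedWalks, Finset.sum_filter]
  refine Finset.sum_congr rfl fun p _ => ?_
  rw [Finset.sum_eq_single (p 0)]
  · rw [prod_polyMat_entries E w hz p]
    by_cases hcl : p (Fin.last r) = p 0
    · by_cases hedge : ∀ i : Fin r,
          E (p i.castSucc) (p i.succ) ∨ E (p i.succ) (p i.castSucc) <;>
        simp [hcl, hedge]
    · have h2 : ¬ (p 0 = p 0 ∧ p (Fin.last r) = p 0) := fun hh => hcl hh.2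
      have h3 : ¬ ((∀ i : Fin r,
          E (p i.castSucc) (p i.succ) ∨ E (p i.succ) (p i.castSucc)) ∧
          p 0 = p (Fin.last r)) := fun hh => hcl hh.2.symm
      rw [if_neg h2, if_neg h3]
  · intro u _ hu
    have : ¬ (p 0 = u ∧ p (Fin.last r) = u) := fun hh => hu hh.1.symm
    simp [this]
  · simp

theorem loopLaw_iff_trace (E : V → V → Prop) [DecidableRel E]
    (w : V → V → ℝ)
    (hloopless : ∀ u, ¬ E u u)
    (honedir : ∀ u v, E u v → ¬ E v u) :
    LoopLaw E w ↔
      ∀ (z : ℝ), 0 < z → ∀ r : ℕ,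
        Matrix.trace (polyMat E w z ^ r) =
          Matrix.trace (polyMat E w 1 ^ r) := by
  constructor
  · intro hll z hz r
    rw [trace_polyMat_pow E w hz r, trace_polyMat_pow E w one_pos r]
    refine Finset.sum_congr rfl fun p hp => ?_
    obtain ⟨hedge, hclosed⟩ := (Finset.mem_filter.mp hp).2
    rw [hll r p hedge hclosed, Real.rpow_zero, Real.rpow_zero]
  · intro h r p hedge hclosed
    have key : ∀ z : ℝ, 0 < z →
        ∑ q ∈ closedWalks E r, z ^ walkWeight E w q
          = ((closedWalks E r).card : ℝ) := by
      intro z hz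
      have h0 := h z hz r
      rw [trace_polyMat_pow E w hz r, trace_polyMat_pow E w one_pos r] at h0
      rw [h0]
      simp [Real.one_rpow]
    have hp : p ∈ closedWalks E r :=
      Finset.mem_filter.mpr ⟨Finset.mem_univ _, hedge, hclosed⟩
    exact exponents_eq_zero (closedWalks E r) (walkWeight E w) key p hp
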